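/- Under the same nilpotency hypotheses, the derivative of the inverse exponential satisfies d/dt e^{-X(t)} = -\mathcal{O}_{X(t)}(dX/dt) \cdot e^{-X(t)}. -/

import Mathlib

/-- Iterated commutator `ad_X^k(Y)`. -/
def adPow {B : Type*} [Mul B] [Sub B] (X : B) : ℕ → B → B
  | 0, Y => Y
  | k + 1, Y => X * adPow X k Y - adPow X k Y * X

namespace Stmt5Aux
open Polynomial Finset

/-! ### Nilpotency layer -/

section
variable {A : Type*} [Ring A] [Algebra ℚ A]

lemma pow_bot_of_nil (S : NonUnitalSubalgebra ℚ A) (m : ℕ)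
    (hnil : ∀ l : List A, (∀ a ∈ l, a ∈ S) → l.length = m → l.prod = 0) :
    ∀ x ∈ (S.toSubmodule : Submodule ℚ A) ^ m, x = 0 := by
  intro x hx
  have key : ∀ (n : ℕ) (y : A), y ∈ (S.toSubmodule : Submodule ℚ A) ^ n →
      y ∈ Submodule.span ℚ {z : A | ∃ l : List A, (∀ a ∈ l, a ∈ S) ∧ l.length = n ∧ l.prod = z} := by
    intro n y hy
    induction hy using Submodule.pow_induction_on_left' with
    | algebraMap r =>
      have h1 : (1 : A) ∈ {z : A | ∃ l : List A, (∀ a ∈ l, a ∈ S) ∧ l.length = 0 ∧ l.prod = z} :=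
        ⟨[], by simp, rfl, List.prod_nil⟩
      have : algebraMap ℚ A r = r • (1 : A) := by rw [Algebra.smul_def, mul_one]
      rw [this]
      exact Submodule.smul_mem _ _ (Submodule.subset_span h1)
    | add x y i hx hy ihx ihy => exact add_mem ihx ihy
    | mem_mul w hw i z hz ih =>
      clear hz
      induction ih using Submodule.span_induction with
      | mem u hu =>
        obtain ⟨l, hl, hlen, hprod⟩ := hu
        exact Submodule.subset_span ⟨w :: l, by
          intro a ha
          rcases List.mem_cons.mp ha with h | h
          · exact h ▸ hw
          · exact hl a h, by simp [hlen], by simp [hprod]⟩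
      | zero => simp
      | add u v hu hv ihu ihv => rw [mul_add]; exact add_mem ihu ihv
      | smul r u hu ihu => rw [mul_smul_comm]; exact Submodule.smul_mem _ _ ihu
  have h0 : {z : A | ∃ l : List A, (∀ a ∈ l, a ∈ S) ∧ l.length = m ∧ l.prod = z} ⊆ {0} := by
    rintro z ⟨l, hl, hlen, rfl⟩
    exact hnil l hl hlen
  have h2 : Submodule.span ℚ {z : A | ∃ l : List A, (∀ a ∈ l, a ∈ S) ∧ l.length = m ∧ l.prod = z}
      ≤ ⊥ := by
    rw [← Submodule.span_zero_singleton (R := ℚ) (M := A)]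
    exact Submodule.span_mono h0
  simpa using h2 (key m x hx)

/-! ### Polynomial coefficient layer -/

lemma coeff_mul_mem (M N : Submodule ℚ A) (f g : Polynomial A)
    (hf : ∀ n, f.coeff n ∈ M) (hg : ∀ n, g.coeff n ∈ N) :
    ∀ n, (f * g).coeff n ∈ M * N := by
  intro n
  rw [Polynomial.coeff_mul]
  exact Submodule.sum_mem _ fun p _ => Submodule.mul_mem_mul (hf p.1) (hg p.2)

lemma coeff_pow_mem (M : Submodule ℚ A) (f : Polynomial A)
    (hf : ∀ n, f.coeff n ∈ M) (k : ℕ) : ∀ n, (f ^ k).coeff n ∈ M ^ k := by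
  induction k with
  | zero =>
    intro n
    rw [pow_zero, pow_zero]
    rcases Nat.eq_zero_or_pos n with rfl | hn
    · rw [Polynomial.coeff_one, if_pos rfl]
      exact Submodule.one_le.mp le_rfl
    · rw [Polynomial.coeff_one, if_neg (by omega)]
      exact Submodule.zero_mem _
  | succ k ih =>
    intro n
    rw [pow_succ, pow_succ]
    exact coeff_mul_mem _ _ _ _ ih hf n

lemma coeff_deriv_mem (M : Submodule ℚ A) (f : Polynomial A)
    (hf : ∀ n, f.coeff n ∈ M) : ∀ n, (Polynomial.derivative f).coeff n ∈ M := by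
  intro n
  rw [Polynomial.coeff_derivative]
  have h1 : ((n:A) + 1) = algebraMap ℚ A ((n:ℚ) + 1) := by push_cast; simp
  have h2 : f.coeff (n + 1) * ((n:A) + 1) = ((n:ℚ) + 1) • f.coeff (n + 1) := by
    rw [h1, ← Algebra.commutes, ← Algebra.smul_def]
  rw [h2]
  exact Submodule.smul_mem _ _ (hf _)
end

/-! ### adPow expansion, powers of negations, derivative of powers -/

section
variable {R : Type*} [Ring R] [Algebra ℚ R]

lemma adPow_lin (X Y : R) (k : ℕ) :
    adPow X k Y = ((LinearMap.mulLeft ℚ X - LinearMap.mulRight ℚ X) ^ k) Y := by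
  induction k with
  | zero => simp [adPow]
  | succ k ih =>
    rw [pow_succ']
    simp [adPow, ih, Module.End.mul_apply, LinearMap.sub_apply]

lemma mulRight_neg_pow_apply (X Y : R) (j : ℕ) :
    ((-(LinearMap.mulRight ℚ X)) ^ j) Y = ((-1 : ℚ) ^ j) • (Y * X ^ j) := by
  induction j with
  | zero => simp
  | succ j ih =>
    rw [pow_succ', Module.End.mul_apply, LinearMap.neg_apply, LinearMap.mulRight_apply, ih]
    rw [pow_succ, pow_succ]
    simp only [smul_mul_assoc, mul_assoc, smul_smul, neg_smul, smul_neg]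
    rw [← neg_smul]
    ring_nf

lemma adPow_expand (X Y : R) (k : ℕ) :
    adPow X k Y = ∑ i ∈ Finset.range (k + 1),
      ((-1 : ℚ) ^ (k - i) * (k.choose i : ℚ)) • (X ^ i * Y * X ^ (k - i)) := by
  rw [adPow_lin]
  have hc : Commute (LinearMap.mulLeft ℚ X) (-(LinearMap.mulRight ℚ X)) :=
    (LinearMap.commute_mulLeft_right (R := ℚ) X X).neg_right
  rw [sub_eq_add_neg, hc.add_pow]
  rw [LinearMap.sum_apply]
  refine Finset.sum_congr rfl fun i hi => ?_
  rw [Module.End.mul_apply, Module.End.mul_apply, Module.End.natCast_apply,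
    mulRight_neg_pow_apply, LinearMap.pow_mulLeft, LinearMap.mulLeft_apply]
  rw [← Nat.cast_smul_eq_nsmul ℚ]
  simp only [smul_mul_assoc, mul_smul_comm, smul_smul, mul_assoc]

lemma neg_pow_smul (x : R) (k : ℕ) : (-x) ^ k = ((-1 : ℚ) ^ k) • x ^ k := by
  induction k with
  | zero => simp
  | succ k ih =>
    rw [pow_succ, pow_succ, ih, pow_succ]
    simp only [smul_mul_assoc, mul_neg, smul_neg, mul_smul_comm]
    rw [mul_one, neg_smul]
end

section
variable {A : Type*} [Ring A]

lemma deriv_pow_noncomm (X : Polynomial A) (k : ℕ) :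
    Polynomial.derivative (X ^ k)
      = ∑ i ∈ Finset.range k, X ^ i * Polynomial.derivative X * X ^ (k - 1 - i) := by
  induction k with
  | zero => simp
  | succ k ih =>
    rw [pow_succ', Polynomial.derivative_mul, ih]
    rw [Finset.sum_range_succ' (fun i => X ^ i * Polynomial.derivative X * X ^ (k + 1 - 1 - i)) k]
    simp only [pow_zero, one_mul, mul_sum]
    rw [add_comm]
    congr 1
    refine Finset.sum_congr rfl fun i hi => ?_
    rw [← mul_assoc, ← mul_assoc, ← pow_succ']
    congr 2
    omega
end

/-! ### Reindexing lemmas -/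

section
variable {R : Type*} [AddCommMonoid R]

lemma reindexL (m : ℕ) (g : ℕ → ℕ → R) (hg : ∀ a b, m ≤ a + b + 1 → g a b = 0) :
    ∑ k ∈ range m, ∑ i ∈ range k, g i (k - 1 - i)
      = ∑ a ∈ range m, ∑ b ∈ range m, g a b := by
  rw [Finset.sum_sigma' (range m) (fun k => range k) (fun k i => g i (k - 1 - i))]
  rw [← Finset.sum_product' (s := range m) (t := range m) (f := fun a b => g a b)]
  rw [← Finset.sum_filter_add_sum_filter_not (range m ×ˢ range m)
    (fun x => x.1 + x.2 + 1 < m) (fun x => g x.1 x.2)]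
  have h2 : ∑ x ∈ (range m ×ˢ range m).filter (fun x => ¬ (x.1 + x.2 + 1 < m)),
      g x.1 x.2 = 0 := by
    refine Finset.sum_eq_zero fun x hx => ?_
    simp only [mem_filter, mem_product, mem_range, not_lt] at hx
    exact hg x.1 x.2 hx.2
  rw [h2, add_zero]
  refine Finset.sum_nbij' (fun x => (x.2, x.1 - 1 - x.2)) (fun y => ⟨y.1 + y.2 + 1, y.1⟩)
    ?_ ?_ ?_ ?_ ?_
  · rintro ⟨k, i⟩ hx
    simp only [mem_sigma, mem_range] at hx
    simp only [mem_filter, mem_product, mem_range]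
    omega
  · rintro ⟨a, b⟩ hy
    simp only [mem_filter, mem_product, mem_range] at hy
    simp only [mem_sigma, mem_range]
    omega
  · rintro ⟨k, i⟩ hx
    simp only [mem_sigma, mem_range] at hx
    dsimp only
    rw [show i + (k - 1 - i) + 1 = k by omega]
  · rintro ⟨a, b⟩ hy
    simp only [mem_filter, mem_product, mem_range] at hy
    dsimp only
    rw [Prod.mk.injEq]
    omega
  · rintro ⟨k, i⟩ hx
    rfl

lemma reindexP (n : ℕ) (f : ℕ → ℕ → R) :
    ∑ k ∈ range n, ∑ i ∈ range (k + 1), f i (k - i)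
      = ∑ x ∈ (range n ×ˢ range n).filter (fun x => x.1 + x.2 < n), f x.1 x.2 := by
  rw [Finset.sum_sigma' (range n) (fun k => range (k + 1)) (fun k i => f i (k - i))]
  refine Finset.sum_nbij' (fun x => (x.2, x.1 - x.2)) (fun y => ⟨y.1 + y.2, y.1⟩)
    ?_ ?_ ?_ ?_ ?_
  · rintro ⟨k, i⟩ hx
    simp only [mem_sigma, mem_range] at hx
    simp only [mem_filter, mem_product, mem_range]
    omega
  · rintro ⟨a, b⟩ hy
    simp only [mem_filter, mem_product, mem_range] at hy
    simp only [mem_sigma, mem_range]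
    omega
  · rintro ⟨k, i⟩ hx
    simp only [mem_sigma, mem_range] at hx
    dsimp only
    rw [show i + (k - i) = k by omega]
  · rintro ⟨a, b⟩ hy
    simp only [mem_filter, mem_product, mem_range] at hy
    dsimp only
    rw [Prod.mk.injEq]
    omega
  · rintro ⟨k, i⟩ hx
    rfl

lemma reindexQ (m : ℕ) (f : ℕ → ℕ → R) (hf : ∀ e j, m ≤ e + j → f e j = 0) :
    ∑ e ∈ range m, ∑ j ∈ range m, f e j
      = ∑ b ∈ range m, ∑ e ∈ range (b + 1), f e (b - e) := by
  rw [← Finset.sum_product' (s := range m) (t := range m) (f := fun e j => f e j)]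
  rw [← Finset.sum_filter_add_sum_filter_not (range m ×ˢ range m)
    (fun x => x.1 + x.2 < m) (fun x => f x.1 x.2)]
  have h2 : ∑ x ∈ (range m ×ˢ range m).filter (fun x => ¬ (x.1 + x.2 < m)),
      f x.1 x.2 = 0 := by
    refine Finset.sum_eq_zero fun x hx => ?_
    simp only [mem_filter, mem_product, mem_range, not_lt] at hx
    exact hf x.1 x.2 hx.2
  rw [h2, add_zero]
  rw [Finset.sum_sigma' (range m) (fun b => range (b + 1)) (fun b e => f e (b - e))]
  refine Finset.sum_nbij' (fun y => (⟨y.1 + y.2, y.1⟩ : Σ _ : ℕ, ℕ)) (fun x => (x.2, x.1 - x.2))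
    ?_ ?_ ?_ ?_ ?_
  · rintro ⟨e, j⟩ hy
    simp only [mem_filter, mem_product, mem_range] at hy
    simp only [mem_sigma, mem_range]
    omega
  · rintro ⟨b, e⟩ hx
    simp only [mem_sigma, mem_range] at hx
    simp only [mem_filter, mem_product, mem_range]
    omega
  · rintro ⟨e, j⟩ hy
    simp only [mem_filter, mem_product, mem_range] at hy
    dsimp only
    rw [Prod.mk.injEq]
    omega
  · rintro ⟨b, e⟩ hx
    simp only [mem_sigma, mem_range] at hx
    dsimp only
    rw [show e + (b - e) = b by omega]
  · rintro ⟨e, j⟩ hy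
    simp only [mem_filter, mem_product, mem_range] at hy
    dsimp only
    rw [show e + j - e = j by omega]
end

/-! ### Scalar identities -/

lemma idB (b : ℕ) : ∀ a : ℕ, ∑ e ∈ range (b + 1), (-1 : ℚ) ^ e * (b.choose e : ℚ) / ((a : ℚ) + e + 1)
    = (a.factorial * b.factorial : ℚ) / ((a + b + 1).factorial : ℚ) := by
  induction b with
  | zero =>
    intro a
    have h1 : ((a + 0 + 1).factorial : ℚ) = ((a : ℚ) + 1) * (a.factorial : ℚ) := by
      rw [show a + 0 + 1 = a + 1 by omega, Nat.factorial_succ]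
      push_cast
      ring
    rw [h1]
    have h2 : (a.factorial : ℚ) ≠ 0 := by positivity
    have h3 : ((a : ℚ) + 1) ≠ 0 := by positivity
    rw [Finset.sum_range_one]
    field_simp
    simp
  | succ b ih =>
    intro a
    rw [Finset.sum_range_succ'
      (fun e => (-1 : ℚ) ^ e * ((b+1).choose e : ℚ) / ((a : ℚ) + e + 1)) (b + 1)]
    have step : ∀ e : ℕ, (-1 : ℚ) ^ (e + 1) * (((b+1).choose (e+1) : ℚ)) / ((a : ℚ) + (e + 1 : ℕ) + 1)
        = -((-1 : ℚ) ^ e * ((b.choose e : ℚ)) / (((a+1 : ℕ) : ℚ) + e + 1))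
          + -((-1 : ℚ) ^ e * ((b.choose (e+1) : ℚ)) / ((a : ℚ) + ((e+1 : ℕ) : ℚ) + 1)) := by
      intro e
      rw [Nat.choose_succ_succ]
      push_cast
      have h1 : (a : ℚ) + 1 + e + 1 ≠ 0 := by positivity
      have h2 : (a : ℚ) + (e + 1) + 1 ≠ 0 := by positivity
      field_simp
      ring
    rw [Finset.sum_congr rfl fun e _ => step e, Finset.sum_add_distrib]
    set g : ℕ → ℚ := fun e => (-1 : ℚ) ^ e * ((b.choose e : ℚ)) / ((a:ℚ) + e + 1) with hg
    have hT : ∑ e ∈ range (b + 1), -((-1 : ℚ) ^ e * ((b.choose (e+1) : ℚ)) / ((a:ℚ) + ((e+1:ℕ):ℚ) + 1))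
        = (∑ e ∈ range (b + 2), g e) - g 0 := by
      rw [Finset.sum_range_succ' g (b+1), add_sub_cancel_right]
      refine Finset.sum_congr rfl fun e _ => ?_
      rw [hg]
      dsimp only
      rw [pow_succ]
      push_cast
      ring
    have hfull : ∑ e ∈ range (b + 2), g e = ∑ e ∈ range (b + 1), g e := by
      rw [Finset.sum_range_succ]
      simp [hg]
    have hneg : ∑ e ∈ range (b+1), -((-1 : ℚ) ^ e * ((b.choose e : ℚ)) / (((a+1:ℕ):ℚ) + e + 1))
        = -((((a+1).factorial : ℚ) * (b.factorial : ℚ)) / (((a+1) + b + 1).factorial : ℚ)) := by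
      rw [← ih (a+1)]
      rw [← Finset.sum_neg_distrib]
    rw [hT, hfull, hneg]
    have hsum : ∑ e ∈ range (b + 1), g e
        = (a.factorial * b.factorial : ℚ) / ((a + b + 1).factorial : ℚ) := ih a
    rw [hsum]
    have e1 : (((a+1) + b + 1).factorial : ℚ) = ((a:ℚ)+b+2) * ((a + b + 1).factorial : ℚ) := by
      rw [show (a+1) + b + 1 = (a + b + 1) + 1 by omega, Nat.factorial_succ]
      push_cast
      ring
    have e2 : ((a + (b+1) + 1).factorial : ℚ) = ((a:ℚ)+b+2) * ((a + b + 1).factorial : ℚ) := by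
      rw [show a + (b+1) + 1 = (a + b + 1) + 1 by omega, Nat.factorial_succ]
      push_cast
      ring
    rw [e1, e2, hg]
    have h2 : ((a + b + 1).factorial : ℚ) ≠ 0 := by positivity
    have h3 : ((a:ℚ) + b + 2) ≠ 0 := by positivity
    have h4 : ((a:ℚ) + 1) ≠ 0 := by positivity
    push_cast [Nat.factorial_succ]
    field_simp
    simp only [Nat.choose_zero_right, Nat.cast_one]
    ring

lemma idK (a b : ℕ) :
    ∑ e ∈ range (b + 1), (-1 : ℚ) ^ e * (((a+e).choose a : ℚ))
        * (((a+e+1).factorial : ℚ))⁻¹ * (((b-e).factorial : ℚ))⁻¹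
      = (((a+b+1).factorial : ℚ))⁻¹ := by
  have key : ∀ e ∈ range (b + 1),
      (-1 : ℚ) ^ e * (((a+e).choose a : ℚ))
        * (((a+e+1).factorial : ℚ))⁻¹ * (((b-e).factorial : ℚ))⁻¹
      = ((a.factorial : ℚ) * (b.factorial : ℚ))⁻¹
        * ((-1 : ℚ) ^ e * (b.choose e : ℚ) / ((a : ℚ) + e + 1)) := by
    intro e he
    rw [mem_range] at he
    have heb : e ≤ b := by omega
    have hC1 : ((a+e).choose a : ℚ)
        = ((a+e).factorial : ℚ) / ((a.factorial : ℚ) * (e.factorial : ℚ)) := by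
      rw [eq_div_iff (by positivity), ← mul_assoc]
      exact_mod_cast congrArg (Nat.cast (R := ℚ)) (by
        have := Nat.choose_mul_factorial_mul_factorial (Nat.le_add_right a e)
        simpa using this)
    have hC2 : (b.choose e : ℚ)
        = (b.factorial : ℚ) / ((e.factorial : ℚ) * ((b-e).factorial : ℚ)) := by
      rw [eq_div_iff (by positivity), ← mul_assoc]
      exact_mod_cast congrArg (Nat.cast (R := ℚ)) (Nat.choose_mul_factorial_mul_factorial heb)
    have hF : ((a+e+1).factorial : ℚ) = ((a:ℚ) + e + 1) * ((a+e).factorial : ℚ) := by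
      rw [Nat.factorial_succ]
      push_cast
      ring
    rw [hC1, hC2, hF]
    have n1 : ((a+e).factorial : ℚ) ≠ 0 := by positivity
    have n2 : (a.factorial : ℚ) ≠ 0 := by positivity
    have n3 : (e.factorial : ℚ) ≠ 0 := by positivity
    have n4 : ((b-e).factorial : ℚ) ≠ 0 := by positivity
    have n5 : (b.factorial : ℚ) ≠ 0 := by positivity
    have n6 : ((a:ℚ) + e + 1) ≠ 0 := by positivity
    field_simp
  rw [Finset.sum_congr rfl key, ← Finset.mul_sum, idB b a]
  have hF : ((a+b+1).factorial : ℚ) ≠ 0 := by positivity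
  have n2 : (a.factorial : ℚ) ≠ 0 := by positivity
  have n5 : (b.factorial : ℚ) ≠ 0 := by positivity
  field_simp

end Stmt5Aux

open Polynomial Finset Stmt5Aux in
/-- Under the same nilpotency hypotheses as for the derivative of `e^{X(t)}`, the
inverse exponential satisfies `d/dt e^{-X(t)} = -𝒪_{X(t)}(dX/dt) · e^{-X(t)}`, where
`𝒪_X(Y) = ∑_k (-1)^k (ad_X)^k(Y)/(k+1)!` (all series are finite sums). -/
theorem stmt5 {A : Type*} [Ring A] [Algebra ℚ A] (S : NonUnitalSubalgebra ℚ A) (m : ℕ)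
    (hnil : ∀ l : List A, (∀ a ∈ l, a ∈ S) → l.length = m → l.prod = 0)
    (X : Polynomial A) (hX : ∀ j, X.coeff j ∈ S) :
    Polynomial.derivative (∑ k ∈ Finset.range m, ((k.factorial : ℚ))⁻¹ • (-X) ^ k)
      = -((∑ k ∈ Finset.range (2 * m),
            ((-1 : ℚ) ^ k * (((k + 1).factorial : ℚ))⁻¹) • adPow X k (Polynomial.derivative X)) *
          (∑ k ∈ Finset.range m, ((k.factorial : ℚ))⁻¹ • (-X) ^ k)) := by
  rcases Nat.eq_zero_or_pos m with rfl | hm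
  · simp
  set q := Polynomial.derivative X with hqdef
  set M : Submodule ℚ A := S.toSubmodule with hMdef
  have hM0 : ∀ x ∈ M ^ m, x = 0 := pow_bot_of_nil S m hnil
  have hMj : ∀ j, m ≤ j → ∀ x ∈ M ^ j, x = 0 := by
    intro j hj x hx
    rw [show j = m + (j - m) by omega, pow_add] at hx
    refine Submodule.mul_induction_on hx (fun p hp r _ => by rw [hM0 p hp, zero_mul]) ?_
    intro y z hy hz
    rw [hy, hz, add_zero]
  have hqc : ∀ n, q.coeff n ∈ M := coeff_deriv_mem M X hX
  have hP : ∀ a b : ℕ, m ≤ a + b + 1 → X ^ a * q * X ^ b = 0 := by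
    intro a b hab
    have h1 : ∀ n, (X ^ a * q).coeff n ∈ M ^ (a + 1) := by
      intro n
      have := coeff_mul_mem (M ^ a) M (X ^ a) q (coeff_pow_mem M X hX a) hqc n
      rwa [← pow_succ] at this
    have h2 : ∀ n, (X ^ a * q * X ^ b).coeff n ∈ M ^ (a + 1 + b) := by
      intro n
      have := coeff_mul_mem (M ^ (a+1)) (M ^ b) _ _ h1 (coeff_pow_mem M X hX b) n
      rwa [← pow_add] at this
    refine Polynomial.ext fun n => ?_
    rw [Polynomial.coeff_zero]
    exact hMj (a + 1 + b) (by omega) _ (h2 n)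
  -- canonical summand
  set g : ℕ → ℕ → Polynomial A := fun a b =>
    ((-1 : ℚ) ^ (a + b + 1) * (((a + b + 1).factorial : ℚ))⁻¹) • (X ^ a * q * X ^ b) with hgdef
  have hgz : ∀ a b, m ≤ a + b + 1 → g a b = 0 := by
    intro a b hab
    rw [hgdef]
    dsimp only
    rw [hP a b hab, smul_zero]
  -- left-hand side
  have hL : Polynomial.derivative (∑ k ∈ Finset.range m, ((k.factorial : ℚ))⁻¹ • (-X) ^ k)
      = ∑ a ∈ range m, ∑ b ∈ range m, g a b := by
    rw [Polynomial.derivative_sum]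
    have h1 : ∀ k, Polynomial.derivative (((k.factorial : ℚ))⁻¹ • (-X) ^ k)
        = ∑ i ∈ range k, g i (k - 1 - i) := by
      intro k
      rw [neg_pow_smul, smul_smul, Polynomial.derivative_smul, deriv_pow_noncomm, Finset.smul_sum]
      refine Finset.sum_congr rfl fun i hi => ?_
      rw [mem_range] at hi
      rw [hgdef]
      dsimp only
      rw [show i + (k - 1 - i) + 1 = k by omega, mul_comm, ← hqdef]
    rw [Finset.sum_congr rfl fun k _ => h1 k]
    exact reindexL m g hgz
  -- right-hand side scalars
  set c1 : ℕ → ℕ → ℚ := fun k i =>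
    ((-1:ℚ)^k * (((k+1).factorial : ℚ))⁻¹) * ((-1:ℚ)^(k - i) * (k.choose i : ℚ)) with hc1
  set c2 : ℕ → ℚ := fun j => ((j.factorial : ℚ))⁻¹ * (-1:ℚ)^j with hc2
  have hE : (∑ k ∈ Finset.range m, ((k.factorial : ℚ))⁻¹ • (-X) ^ k)
      = ∑ j ∈ range m, c2 j • X ^ j := by
    refine Finset.sum_congr rfl fun j _ => ?_
    rw [neg_pow_smul, smul_smul, hc2]
  have hO : (∑ k ∈ Finset.range (2 * m),
        ((-1 : ℚ) ^ k * (((k + 1).factorial : ℚ))⁻¹) • adPow X k q)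
      = ∑ k ∈ range (2*m), ∑ i ∈ range (k+1), c1 k i • (X^i * q * X^(k-i)) := by
    refine Finset.sum_congr rfl fun k _ => ?_
    rw [adPow_expand, Finset.smul_sum]
    refine Finset.sum_congr rfl fun i _ => ?_
    rw [smul_smul, hc1]
  -- the product
  have hOE : (∑ k ∈ Finset.range (2 * m),
        ((-1 : ℚ) ^ k * (((k + 1).factorial : ℚ))⁻¹) • adPow X k q) *
      (∑ k ∈ Finset.range m, ((k.factorial : ℚ))⁻¹ • (-X) ^ k)
      = ∑ a ∈ range m, ∑ b ∈ range m,
        (((-1:ℚ)^(a+b) * (((a+b+1).factorial:ℚ))⁻¹) • (X^a * q * X^b)) := by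
    rw [hO, hE, Finset.sum_mul]
    have step1 : ∀ k ∈ range (2*m),
        (∑ i ∈ range (k+1), c1 k i • (X^i * q * X^(k-i))) * (∑ j ∈ range m, c2 j • X ^ j)
        = ∑ i ∈ range (k+1), ∑ j ∈ range m,
            (c1 (i + (k-i)) i * c2 j) • (X^i * q * X^((k-i)+j)) := by
      intro k hk
      rw [Finset.sum_mul]
      refine Finset.sum_congr rfl fun i hi => ?_
      rw [Finset.mul_sum]
      refine Finset.sum_congr rfl fun j hj => ?_
      rw [mem_range] at hi
      rw [smul_mul_smul_comm, show i + (k - i) = k by omega]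
      congr 1
      rw [mul_assoc, ← pow_add]
    rw [Finset.sum_congr rfl step1]
    rw [reindexP (2*m) (fun a e => ∑ j ∈ range m, (c1 (a+e) a * c2 j) • (X^a * q * X^(e+j)))]
    have hsub : (range m ×ˢ range m)
        ⊆ (range (2*m) ×ˢ range (2*m)).filter (fun x => x.1 + x.2 < 2*m) := by
      intro x hx
      simp only [mem_product, mem_range] at hx
      simp only [mem_filter, mem_product, mem_range]
      omega
    have hzero : ∀ x ∈ (range (2*m) ×ˢ range (2*m)).filter (fun x => x.1 + x.2 < 2*m),
        x ∉ (range m ×ˢ range m) →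
        (∑ j ∈ range m, (c1 (x.1+x.2) x.1 * c2 j) • (X^x.1 * q * X^(x.2+j))) = 0 := by
      intro x hx hnx
      simp only [mem_filter, mem_product, mem_range] at hx
      simp only [mem_product, mem_range] at hnx
      refine Finset.sum_eq_zero fun j _ => ?_
      rw [hP x.1 (x.2 + j) (by omega), smul_zero]
    rw [← Finset.sum_subset hsub hzero]
    rw [Finset.sum_product]
    refine Finset.sum_congr rfl fun a ha => ?_
    rw [mem_range] at ha
    rw [reindexQ m (fun e j => (c1 (a+e) a * c2 j) • (X^a * q * X^(e+j)))
      (fun e j hej => by rw [hP a (e+j) (by omega), smul_zero])]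
    refine Finset.sum_congr rfl fun b hb => ?_
    have hterm : ∀ e ∈ range (b+1), (c1 (a+e) a * c2 (b-e)) • (X^a * q * X^(e+(b-e)))
        = (((-1:ℚ)^(a+b)) * ((-1:ℚ)^e * (((a+e).choose a : ℚ))
            * (((a+e+1).factorial:ℚ))⁻¹ * (((b-e).factorial:ℚ))⁻¹)) • (X^a * q * X^b) := by
      intro e he
      rw [mem_range] at he
      rw [show e + (b - e) = b by omega]
      congr 1
      rw [hc1, hc2]
      dsimp only
      rw [show a + e - a = e by omega]
      have hs2 : ((-1:ℚ))^e * (-1:ℚ)^e = 1 := by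
        rw [← pow_add, show e + e = 2*e by omega, pow_mul]
        norm_num
      have hsign : ((-1:ℚ))^(b-e) = (-1:ℚ)^b * (-1:ℚ)^e := by
        rw [← pow_add, show b + e = (b-e) + 2*e by omega, pow_add, pow_mul]
        norm_num
      rw [hsign, pow_add, pow_add]
      linear_combination (((-1:ℚ))^a * (-1:ℚ)^b * (-1:ℚ)^e * (((a+e).choose a : ℚ))
        * (((a+e+1).factorial:ℚ))⁻¹ * (((b-e).factorial:ℚ))⁻¹) * hs2
    rw [Finset.sum_congr rfl hterm, ← Finset.sum_smul, ← Finset.mul_sum, idK a b]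
  rw [hL, hOE]
  rw [← Finset.sum_neg_distrib]
  refine Finset.sum_congr rfl fun a _ => ?_
  rw [← Finset.sum_neg_distrib]
  refine Finset.sum_congr rfl fun b _ => ?_
  rw [hgdef]
  dsimp only
  rw [← neg_smul]
  congr 1
  rw [pow_succ]
  ring
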